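/- The constant 1/60 is best possible in the inequality 2x/sin x + x/tan x > 3 + c·x³·sin x for 0 < x < π/2; precisely, the limit as x → 0⁺ of (2x/sin x + x/tan x − 3)/(x³ sin x) equals 1/60. -/

import Mathlib

open Real Filter Set

lemma sin_div_self_tendsto :
    Tendsto (fun x : ℝ => Real.sin x / x) (nhdsWithin 0 (Set.Ioi 0)) (nhds 1) := by
  have h : HasDerivAt Real.sin 1 0 := by simpa using Real.hasDerivAt_sin 0
  have := h.hasDerivWithinAt (s := Set.Ioi 0)
  rw [hasDerivWithinAt_iff_tendsto_slope] at this
  have h2 : Tendsto (fun x : ℝ => Real.sin x / x) (nhdsWithin 0 (Set.Ioi 0 \ {0})) (nhds 1) := by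
    refine this.congr' ?_
    filter_upwards [self_mem_nhdsWithin] with x hx
    simp [slope, Real.sin_zero, div_eq_inv_mul]
  rwa [Set.diff_singleton_eq_self (by simp)] at h2

lemma aux_tendsto :
    Tendsto (fun x : ℝ => (x * (2 + Real.cos x) - 3 * Real.sin x) / x ^ 5)
      (nhdsWithin 0 (Set.Ioi 0)) (nhds (1 / 60)) := by
  have hL3 : Tendsto (fun x : ℝ => x * Real.sin x / (60 * x ^ 2))
      (nhdsWithin 0 (Set.Ioi 0)) (nhds (1 / 60)) := by
    have := sin_div_self_tendsto.div_const (60 : ℝ)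
    refine (this.congr' ?_ : _)
    filter_upwards [self_mem_nhdsWithin] with x hx
    have hx0 : x ≠ 0 := ne_of_gt hx
    field_simp
  have hL2 : Tendsto (fun x : ℝ => (Real.sin x - x * Real.cos x) / (20 * x ^ 3))
      (nhdsWithin 0 (Set.Ioi 0)) (nhds (1 / 60)) := by
    apply HasDerivAt.lhopital_zero_right_on_Ioo (f' := fun x => x * Real.sin x)
      (g' := fun x => 60 * x ^ 2) (b := 1) one_pos
    · intro x _
      have h1 : HasDerivAt Real.sin (Real.cos x) x := Real.hasDerivAt_sin x
      have h2 : HasDerivAt (fun x : ℝ => x * Real.cos x) (Real.cos x - x * Real.sin x) x := by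
        exact (hasDerivAt_id x).mul (Real.hasDerivAt_cos x) |>.congr_deriv (by simp only [id_eq]; ring)
      exact h1.sub h2 |>.congr_deriv (by ring)
    · intro x _
      simpa using ((hasDerivAt_pow 3 x).const_mul (20 : ℝ)).congr_deriv (by ring)
    · intro x hx; have hx0 : 0 < x := hx.1; positivity
    · have : ContinuousAt (fun x : ℝ => Real.sin x - x * Real.cos x) 0 := by fun_prop
      have := this.tendsto
      simp only [Real.sin_zero, Real.cos_zero, mul_one, zero_mul, mul_zero, sub_zero] at this
      simpa using tendsto_nhdsWithin_of_tendsto_nhds (by simpa using this)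
    · have : ContinuousAt (fun x : ℝ => 20 * x ^ 3) 0 := by fun_prop
      have := this.tendsto
      simpa using tendsto_nhdsWithin_of_tendsto_nhds (by simpa using this)
    · exact hL3
  have hL1 : Tendsto (fun x : ℝ => (2 - 2 * Real.cos x - x * Real.sin x) / (5 * x ^ 4))
      (nhdsWithin 0 (Set.Ioi 0)) (nhds (1 / 60)) := by
    apply HasDerivAt.lhopital_zero_right_on_Ioo (f' := fun x => Real.sin x - x * Real.cos x)
      (g' := fun x => 20 * x ^ 3) (b := 1) one_pos
    · intro x _
      have h1 : HasDerivAt (fun x : ℝ => 2 - 2 * Real.cos x) (2 * Real.sin x) x := by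
        exact (hasDerivAt_const x (2:ℝ)).sub ((Real.hasDerivAt_cos x).const_mul 2) |>.congr_deriv (by ring)
      have h2 : HasDerivAt (fun x : ℝ => x * Real.sin x) (Real.sin x + x * Real.cos x) x := by
        exact (hasDerivAt_id x).mul (Real.hasDerivAt_sin x) |>.congr_deriv (by simp only [id_eq]; ring)
      exact (h1.sub h2).congr_deriv (by ring)
    · intro x _
      simpa using ((hasDerivAt_pow 4 x).const_mul (5 : ℝ)).congr_deriv (by ring)
    · intro x hx; have hx0 : 0 < x := hx.1; positivity
    · have : ContinuousAt (fun x : ℝ => 2 - 2 * Real.cos x - x * Real.sin x) 0 := by fun_prop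
      have := this.tendsto
      simp only [Real.cos_zero, Real.sin_zero, mul_one, mul_zero, sub_zero] at this
      apply tendsto_nhdsWithin_of_tendsto_nhds
      simpa using this
    · have : ContinuousAt (fun x : ℝ => 5 * x ^ 4) 0 := by fun_prop
      have := this.tendsto
      simpa using tendsto_nhdsWithin_of_tendsto_nhds (by simpa using this)
    · exact hL2
  apply HasDerivAt.lhopital_zero_right_on_Ioo (f' := fun x => 2 - 2 * Real.cos x - x * Real.sin x)
    (g' := fun x => 5 * x ^ 4) (b := 1) one_pos
  · intro x _
    have h1 : HasDerivAt (fun x : ℝ => x * (2 + Real.cos x))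
        ((2 + Real.cos x) + x * (-Real.sin x)) x :=
      (hasDerivAt_id x).mul ((hasDerivAt_const x (2:ℝ)).add (Real.hasDerivAt_cos x)) |>.congr_deriv
        (by simp only [id_eq, Pi.add_apply]; ring)
    have h2 : HasDerivAt (fun x : ℝ => 3 * Real.sin x) (3 * Real.cos x) x :=
      (Real.hasDerivAt_sin x).const_mul 3
    exact (h1.sub h2).congr_deriv (by ring)
  · intro x _
    simpa using (hasDerivAt_pow 5 x).congr_deriv (by ring)
  · intro x hx; have hx0 : 0 < x := hx.1; positivity
  · have : ContinuousAt (fun x : ℝ => x * (2 + Real.cos x) - 3 * Real.sin x) 0 := by fun_prop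
    have := this.tendsto
    simp only [Real.cos_zero, Real.sin_zero, zero_mul, mul_zero, sub_zero] at this
    apply tendsto_nhdsWithin_of_tendsto_nhds
    simpa using this
  · apply tendsto_nhdsWithin_of_tendsto_nhds
    simpa using (continuous_pow 5).tendsto (0:ℝ)
  · exact hL1

theorem huygens_best_constant :
    Tendsto (fun x : ℝ => (2 * x / Real.sin x + x / Real.tan x - 3) / (x ^ 3 * Real.sin x))
      (nhdsWithin 0 (Set.Ioi 0)) (nhds (1 / 60)) := by
  have hsd : Tendsto (fun x : ℝ => x / Real.sin x) (nhdsWithin 0 (Set.Ioi 0)) (nhds 1) := by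
    have := sin_div_self_tendsto.inv₀ one_ne_zero
    rw [inv_one] at this
    exact this.congr (fun x => inv_div _ _)
  have hmain : Tendsto (fun x : ℝ =>
      (x * (2 + Real.cos x) - 3 * Real.sin x) / x ^ 5 * ((x / Real.sin x) * (x / Real.sin x)))
      (nhdsWithin 0 (Set.Ioi 0)) (nhds (1 / 60)) := by
    have := aux_tendsto.mul (hsd.mul hsd)
    simpa using this
  refine hmain.congr' ?_
  filter_upwards [Ioo_mem_nhdsGT_of_mem (by norm_num : (0:ℝ) ∈ Set.Ico 0 1),
    self_mem_nhdsWithin] with x hx hx'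
  have hx0 : (0:ℝ) < x := hx.1
  have hx1 : x < 1 := hx.2
  have hs : Real.sin x > 0 := Real.sin_pos_of_pos_of_lt_pi hx0 (lt_trans hx1 (by linarith [Real.pi_gt_three]))
  have hc : Real.cos x > 0 := Real.cos_pos_of_mem_Ioo ⟨by linarith [Real.pi_gt_three], by linarith [Real.pi_gt_three]⟩
  rw [Real.tan_eq_sin_div_cos]
  field_simp
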